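/- Let (X, X̃) and (Y, Ỹ) be Cauchy pairs on an n-dimensional K-vector space V, and suppose some Cauchy matrix C ∈ Mat_n(K) is associated to both pairs (i.e. there is eigenvalue data for each pair that serves as data for C). Then there exists ζ ∈ K and a vector space isomorphism φ : V → V such that φX = (Y + ζI)φ and φX̃ = (Ỹ + ζI)φ. -/

import Mathlib

def IsCauchyPair (K V : Type*) [Field K] [AddCommGroup V] [Module K V]
    (X Xt : Module.End K V) : Prop :=
  (⨆ μ : K, X.eigenspace μ) = ⊤ ∧
  (⨆ μ : K, Xt.eigenspace μ) = ⊤ ∧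
  Module.rank K (LinearMap.range (X - Xt)) = 1 ∧
  ∀ W : Submodule K V, W.map (X : V →ₗ[K] V) ≤ W → W.map (Xt : V →ₗ[K] V) ≤ W →
    W = ⊥ ∨ W = ⊤

open Module Submodule in
theorem cauchyPairData {K V : Type*} [Field K] [AddCommGroup V] [Module K V]
    [FiniteDimensional K V] {n : ℕ} {X Xt : Module.End K V}
    (hXX : IsCauchyPair K V X Xt)
    (x xt : Fin n → K)
    (hxinj : Function.Injective x)
    (hxeig : ∀ i, X.HasEigenvalue (x i))
    (hxall : ∀ μ : K, X.HasEigenvalue μ → ∃ i, x i = μ)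
    (hxtinj : Function.Injective xt)
    (hxteig : ∀ i, Xt.HasEigenvalue (xt i))
    (hxtall : ∀ μ : K, Xt.HasEigenvalue μ → ∃ i, xt i = μ) :
    ∃ (b : Basis (Fin n) K V) (ξ : Fin n → K),
      (∀ i, X (b i) = x i • b i) ∧
      (∀ i, Xt (b i) = x i • b i - ∑ k, ξ k • b k) ∧
      (∀ j, ∑ i, ξ i * (x i - xt j)⁻¹ = 1) ∧
      (∀ η : Fin n → K, (∀ j, ∑ i, η i * (x i - xt j)⁻¹ = 1) → η = ξ) := by
  classical
  obtain ⟨hXsup, hXtsup, hrank, hirr⟩ := hXX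
  set R : Module.End K V := X - Xt with hRdef
  have hXtw : ∀ w : V, Xt w = X w - R w := by
    intro w; simp [hRdef, LinearMap.sub_apply]
  have hfin1 : finrank K (LinearMap.range R) = 1 :=
    Module.rank_eq_one_iff_finrank_eq_one.mp hrank
  -- eigenspaces meet ker R trivially
  have hker : ∀ μ : K, (X.eigenspace μ ⊓ LinearMap.ker R = ⊥) ∧
      (Xt.eigenspace μ ⊓ LinearMap.ker R = ⊥) := by
    let P : Submodule K V := ⨆ μ : K, (X.eigenspace μ ⊓ LinearMap.ker R)
    let Q : Submodule K V := ⨆ μ : K, (Xt.eigenspace μ ⊓ LinearMap.ker R)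
    have hPle : ∀ μ : K, X.eigenspace μ ⊓ LinearMap.ker R ≤ P :=
      fun μ => le_iSup (fun μ => X.eigenspace μ ⊓ LinearMap.ker R) μ
    have hQle : ∀ μ : K, Xt.eigenspace μ ⊓ LinearMap.ker R ≤ Q :=
      fun μ => le_iSup (fun μ => Xt.eigenspace μ ⊓ LinearMap.ker R) μ
    have hPQker : P ⊔ Q ≤ LinearMap.ker R := by
      apply sup_le <;> exact iSup_le fun μ => inf_le_right
    have hmapX : (P ⊔ Q).map (X : V →ₗ[K] V) ≤ P ⊔ Q := by
      rw [Submodule.map_sup]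
      apply sup_le
      · rw [Submodule.map_iSup]
        refine iSup_le fun μ => ?_
        refine le_trans ?_ (le_trans (hPle μ) le_sup_left)
        rintro _ ⟨w, hw, rfl⟩
        have hw1 : X w = μ • w := Module.End.mem_eigenspace_iff.mp hw.1
        rw [hw1]; exact Submodule.smul_mem _ _ hw
      · rw [Submodule.map_iSup]
        refine iSup_le fun μ => ?_
        refine le_trans ?_ (le_trans (hQle μ) le_sup_right)
        rintro _ ⟨w, hw, rfl⟩
        have hw1 : Xt w = μ • w := Module.End.mem_eigenspace_iff.mp hw.1
        have hw2 : R w = 0 := hw.2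
        have : X w = μ • w := by
          have := hXtw w; rw [hw1, hw2, sub_zero] at this; exact this.symm
        rw [this]; exact Submodule.smul_mem _ _ hw
    have hmapXt : (P ⊔ Q).map (Xt : V →ₗ[K] V) ≤ P ⊔ Q := by
      rw [Submodule.map_sup]
      apply sup_le
      · rw [Submodule.map_iSup]
        refine iSup_le fun μ => ?_
        refine le_trans ?_ (le_trans (hPle μ) le_sup_left)
        rintro _ ⟨w, hw, rfl⟩
        have hw1 : X w = μ • w := Module.End.mem_eigenspace_iff.mp hw.1
        have hw2 : R w = 0 := hw.2
        have : Xt w = μ • w := by rw [hXtw w, hw1, hw2, sub_zero]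
        rw [this]; exact Submodule.smul_mem _ _ hw
      · rw [Submodule.map_iSup]
        refine iSup_le fun μ => ?_
        refine le_trans ?_ (le_trans (hQle μ) le_sup_right)
        rintro _ ⟨w, hw, rfl⟩
        have hw1 : Xt w = μ • w := Module.End.mem_eigenspace_iff.mp hw.1
        rw [hw1]; exact Submodule.smul_mem _ _ hw
    rcases hirr _ hmapX hmapXt with hbot | htop
    · intro μ
      constructor
      · exact le_bot_iff.mp (le_trans (le_trans (hPle μ) le_sup_left) hbot.le)
      · exact le_bot_iff.mp (le_trans (le_trans (hQle μ) le_sup_right) hbot.le)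
    · exfalso
      have : LinearMap.ker R = ⊤ := top_le_iff.mp (htop ▸ hPQker)
      have hR0 : R = 0 := LinearMap.ker_eq_top.mp this
      rw [hR0] at hfin1
      rw [LinearMap.range_zero] at hfin1
      simp [finrank_bot] at hfin1
  -- eigenspace dimension bounds
  have hdim : ∀ (Z : Module.End K V) (μ : K),
      Z.eigenspace μ ⊓ LinearMap.ker R = ⊥ → finrank K (Z.eigenspace μ) ≤ 1 := by
    intro Z μ hbot
    have hinj : Function.Injective ((R : V →ₗ[K] V).domRestrict (Z.eigenspace μ)) := by
      rw [← LinearMap.ker_eq_bot]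
      rw [Submodule.eq_bot_iff]
      rintro ⟨w, hw⟩ hwk
      have hwker : w ∈ LinearMap.ker R := by
        simpa [LinearMap.domRestrict_apply] using hwk
      have : w ∈ Z.eigenspace μ ⊓ LinearMap.ker R := ⟨hw, hwker⟩
      rw [hbot] at this
      simpa using this
    have h1 : finrank K (Z.eigenspace μ) =
        finrank K (LinearMap.range ((R : V →ₗ[K] V).domRestrict (Z.eigenspace μ))) :=
      (LinearMap.finrank_range_of_inj hinj).symm
    have h2 : LinearMap.range ((R : V →ₗ[K] V).domRestrict (Z.eigenspace μ)) ≤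
        LinearMap.range R := by
      rintro _ ⟨w, rfl⟩; exact ⟨w, rfl⟩
    rw [h1, ← hfin1]
    exact Submodule.finrank_mono h2
  -- pick eigenvectors
  choose v hv using fun i => (hxeig i).exists_hasEigenvector
  choose u hu using fun j => (hxteig j).exists_hasEigenvector
  have hspanE : ∀ i, X.eigenspace (x i) = K ∙ v i := by
    intro i
    refine (Submodule.eq_of_le_of_finrank_le ?_ ?_).symm
    · rw [Submodule.span_le, Set.singleton_subset_iff]; exact (hv i).1
    · rw [finrank_span_singleton (hv i).2]
      exact hdim X (x i) (hker (x i)).1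
  have hspanEt : ∀ j, Xt.eigenspace (xt j) = K ∙ u j := by
    intro j
    refine (Submodule.eq_of_le_of_finrank_le ?_ ?_).symm
    · rw [Submodule.span_le, Set.singleton_subset_iff]; exact (hu j).1
    · rw [finrank_span_singleton (hu j).2]
      exact hdim Xt (xt j) (hker (xt j)).2
  have hspan_top : Submodule.span K (Set.range v) = ⊤ := by
    rw [Submodule.span_range_eq_iSup]
    apply le_antisymm le_top
    rw [← hXsup]
    apply iSup_le
    intro μ
    by_cases h : X.HasEigenvalue μ
    · obtain ⟨i, rfl⟩ := hxall μ h
      rw [hspanE i]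
      exact le_iSup (fun i => K ∙ v i) i
    · have hb : X.eigenspace μ = ⊥ := not_not.mp (fun hne => h (Module.End.hasEigenvalue_iff.mpr hne))
      rw [hb]; exact bot_le
  have hspan_top_u : Submodule.span K (Set.range u) = ⊤ := by
    rw [Submodule.span_range_eq_iSup]
    apply le_antisymm le_top
    rw [← hXtsup]
    apply iSup_le
    intro μ
    by_cases h : Xt.HasEigenvalue μ
    · obtain ⟨j, rfl⟩ := hxtall μ h
      rw [hspanEt j]
      exact le_iSup (fun j => K ∙ u j) j
    · have hb : Xt.eigenspace μ = ⊥ := not_not.mp (fun hne => h (Module.End.hasEigenvalue_iff.mpr hne))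
      rw [hb]; exact bot_le
  -- basis of eigenvectors of X
  have hli : LinearIndependent K v := X.eigenvectors_linearIndependent' x hxinj v hv
  let b0 : Basis (Fin n) K V := Basis.mk hli (by rw [hspan_top])
  have hb0 : ∀ i, b0 i = v i := fun i => Basis.mk_apply hli _ i
  -- the vector ξ spanning range R and the functional f
  have hRne : LinearMap.range R ≠ ⊥ := by
    intro h; rw [h] at hfin1; simp [finrank_bot] at hfin1
  obtain ⟨ξ, hξR, hξ0⟩ := (Submodule.ne_bot_iff _).mp hRne
  have hrangeR : LinearMap.range R = K ∙ ξ := by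
    refine (Submodule.eq_of_le_of_finrank_le ?_ ?_).symm
    · rw [Submodule.span_le, Set.singleton_subset_iff]; exact hξR
    · rw [finrank_span_singleton hξ0, hfin1]
  have hmemξ : ∀ w : V, R w ∈ K ∙ ξ := by
    intro w; rw [← hrangeR]; exact LinearMap.mem_range_self R w
  let f : V →ₗ[K] K :=
    (LinearEquiv.toSpanNonzeroSingleton K V ξ hξ0).symm.toLinearMap ∘ₗ
      LinearMap.codRestrict (K ∙ ξ) (R : V →ₗ[K] V) hmemξ
  have hf : ∀ w : V, R w = f w • ξ := by
    intro w
    have h1 := (LinearEquiv.toSpanNonzeroSingleton K V ξ hξ0).apply_symm_apply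
      (LinearMap.codRestrict (K ∙ ξ) (R : V →ₗ[K] V) hmemξ w)
    have h2 := congrArg (Subtype.val) h1
    rw [LinearEquiv.toSpanNonzeroSingleton_apply] at h2
    simpa [f, LinearMap.codRestrict_apply] using h2.symm
  have hXtw' : ∀ w : V, Xt w = X w - f w • ξ := by
    intro w; rw [hXtw w, hf w]
  -- f does not vanish on the eigenvectors v i
  have hfv : ∀ i, f (v i) ≠ 0 := by
    intro i hfi
    let S : Set (Fin n) := {k | f (v k) = 0}
    let W : Submodule K V := Submodule.span K (v '' S)
    have hWX : W.map (X : V →ₗ[K] V) ≤ W := by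
      rw [Submodule.map_span, Submodule.span_le]
      rintro _ ⟨_, ⟨k, hk, rfl⟩, rfl⟩
      have : X (v k) = x k • v k := Module.End.mem_eigenspace_iff.mp (hv k).1
      rw [this]
      exact Submodule.smul_mem _ _ (Submodule.subset_span ⟨k, hk, rfl⟩)
    have hWXt : W.map (Xt : V →ₗ[K] V) ≤ W := by
      rw [Submodule.map_span, Submodule.span_le]
      rintro _ ⟨_, ⟨k, hk, rfl⟩, rfl⟩
      have hXk : X (v k) = x k • v k := Module.End.mem_eigenspace_iff.mp (hv k).1
      have : Xt (v k) = x k • v k := by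
        rw [hXtw' (v k), hXk, hk, zero_smul, sub_zero]
      rw [this]
      exact Submodule.smul_mem _ _ (Submodule.subset_span ⟨k, hk, rfl⟩)
    rcases hirr W hWX hWXt with hbot | htop
    · have : v i ∈ W := Submodule.subset_span ⟨i, hfi, rfl⟩
      rw [hbot] at this
      exact (hv i).2 (by simpa using this)
    · -- then f vanishes on all v k, hence f = 0 and R = 0
      have hSuniv : ∀ k, f (v k) = 0 := by
        intro k
        by_contra hk
        have hnotin : v k ∉ Submodule.span K (v '' S) :=
          hli.notMem_span_image (s := S) hk
        rw [show Submodule.span K (v '' S) = W from rfl, htop] at hnotin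
        exact hnotin Submodule.mem_top
      have hfzero : f = 0 := by
        apply LinearMap.ext_on hspan_top
        rintro _ ⟨k, rfl⟩
        exact hSuniv k
      have hR0 : R = 0 := by
        ext w; rw [hf w, hfzero]; simp
      rw [hR0, LinearMap.range_zero] at hfin1
      simp [finrank_bot] at hfin1
  -- normalized basis
  let b : Basis (Fin n) K V := b0.unitsSMul (fun i => (Units.mk0 (f (v i)) (hfv i))⁻¹)
  have hb : ∀ i, b i = (f (v i))⁻¹ • v i := by
    intro i
    rw [Basis.unitsSMul_apply, hb0]
    rfl
  have hfb : ∀ i, f (b i) = 1 := by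
    intro i
    rw [hb i, map_smul, smul_eq_mul, inv_mul_cancel₀ (hfv i)]
  have hXb : ∀ i, X (b i) = x i • b i := by
    intro i
    have : X (v i) = x i • v i := Module.End.mem_eigenspace_iff.mp (hv i).1
    rw [hb i, map_smul, this, smul_comm]
  have hXtb : ∀ i, Xt (b i) = x i • b i - ξ := by
    intro i
    rw [hXtw' (b i), hXb i, hfb i, one_smul]
  -- coordinates
  let ξv : Fin n → K := fun k => b.repr ξ k
  have hsumξ : ∑ k, ξv k • b k = ξ := b.sum_repr ξ
  have hXtb' : ∀ i, Xt (b i) = x i • b i - ∑ k, ξv k • b k := by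
    intro i; rw [hXtb i, hsumξ]
  -- repr of X w
  have hcoordX : ∀ i : Fin n, (b.coord i) ∘ₗ (X : V →ₗ[K] V) = x i • b.coord i := by
    intro i
    apply b.ext
    intro k
    rw [LinearMap.comp_apply, Basis.coord_apply, hXb k, map_smul, Finsupp.smul_apply,
      Basis.repr_self, LinearMap.smul_apply, Basis.coord_apply, Basis.repr_self,
      smul_eq_mul, smul_eq_mul, Finsupp.single_apply]
    by_cases h : k = i
    · subst h; simp
    · simp [h]
  have hreprX : ∀ (w : V) (i : Fin n), b.repr (X w) i = x i * b.repr w i := by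
    intro w i
    simpa [Basis.coord_apply, smul_eq_mul] using LinearMap.congr_fun (hcoordX i) w
  have hreprXt : ∀ (w : V) (i : Fin n),
      b.repr (Xt w) i = x i * b.repr w i - f w * ξv i := by
    intro w i
    rw [hXtw' w, map_sub, map_smul, Finsupp.sub_apply, Finsupp.smul_apply, hreprX,
      smul_eq_mul]
  -- coordinates of ξ are all nonzero
  have hξv : ∀ k, ξv k ≠ 0 := by
    intro k0 hk0
    let S : Set (Fin n) := {k | ξv k ≠ 0}
    let W : Submodule K V := Submodule.span K (b '' S)
    have hξW : ξ ∈ W := by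
      rw [← hsumξ]
      apply Submodule.sum_mem
      intro k _
      by_cases h : ξv k = 0
      · rw [h, zero_smul]; exact W.zero_mem
      · exact Submodule.smul_mem _ _ (Submodule.subset_span ⟨k, h, rfl⟩)
    have hWX : W.map (X : V →ₗ[K] V) ≤ W := by
      rw [Submodule.map_span, Submodule.span_le]
      rintro _ ⟨_, ⟨k, hk, rfl⟩, rfl⟩
      rw [hXb k]
      exact Submodule.smul_mem _ _ (Submodule.subset_span ⟨k, hk, rfl⟩)
    have hWXt : W.map (Xt : V →ₗ[K] V) ≤ W := by
      rw [Submodule.map_span, Submodule.span_le]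
      rintro _ ⟨_, ⟨k, hk, rfl⟩, rfl⟩
      rw [hXtb k]
      exact Submodule.sub_mem _
        (Submodule.smul_mem _ _ (Submodule.subset_span ⟨k, hk, rfl⟩)) hξW
    rcases hirr W hWX hWXt with hbot | htop
    · rw [hbot] at hξW
      exact hξ0 (by simpa using hξW)
    · have hnotin : b k0 ∉ Submodule.span K (b '' S) :=
        b.linearIndependent.notMem_span_image (s := S) (fun h => h hk0)
      rw [show Submodule.span K (b '' S) = W from rfl, htop] at hnotin
      exact hnotin Submodule.mem_top
  -- key coordinate equation for eigenvectors of Xt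
  have hcu : ∀ j k, xt j * b.repr (u j) k = x k * b.repr (u j) k - f (u j) * ξv k := by
    intro j k
    have hXtu : Xt (u j) = xt j • u j := Module.End.mem_eigenspace_iff.mp (hu j).1
    have h1 := hreprXt (u j) k
    rw [hXtu, map_smul, Finsupp.smul_apply, smul_eq_mul] at h1
    exact h1
  -- eigenvalues of X and Xt are distinct
  have hxxt : ∀ i j, x i ≠ xt j := by
    intro i j hij
    have hfu0 : f (u j) = 0 := by
      have h1 := hcu j i
      rw [← hij] at h1
      have h2 : f (u j) * ξv i = 0 := by linear_combination h1
      rcases mul_eq_zero.mp h2 with h | h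
      · exact h
      · exact absurd h (hξv i)
    have hXu : X (u j) = x i • u j := by
      have hXtu : Xt (u j) = xt j • u j := Module.End.mem_eigenspace_iff.mp (hu j).1
      rw [hXtw' (u j), hfu0, zero_smul, sub_zero] at hXtu
      rw [hXtu, hij]
    have hmem : u j ∈ X.eigenspace (x i) := Module.End.mem_eigenspace_iff.mpr hXu
    rw [hspanE i] at hmem
    obtain ⟨a, ha⟩ := Submodule.mem_span_singleton.mp hmem
    have ha0 : a ≠ 0 := by
      intro h; rw [h, zero_smul] at ha; exact (hu j).2 ha.symm
    have : f (u j) = a * f (v i) := by rw [← ha, map_smul, smul_eq_mul]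
    rw [hfu0] at this
    exact mul_ne_zero ha0 (hfv i) this.symm
  -- f does not vanish on the u j
  have hfu : ∀ j, f (u j) ≠ 0 := by
    intro j h0
    have hc0 : ∀ k, b.repr (u j) k = 0 := by
      intro k
      have h1 := hcu j k
      rw [h0, zero_mul, sub_zero] at h1
      have h2 : (x k - xt j) * b.repr (u j) k = 0 := by linear_combination -h1
      rcases mul_eq_zero.mp h2 with h | h
      · exact absurd h (sub_ne_zero.mpr (hxxt k j))
      · exact h
    have : u j = 0 := by
      rw [← b.sum_repr (u j)]
      simp [hc0]
    exact (hu j).2 this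
  -- explicit coordinates of u j
  have hck : ∀ j k, b.repr (u j) k = f (u j) * ξv k * (x k - xt j)⁻¹ := by
    intro j k
    have hne : x k - xt j ≠ 0 := sub_ne_zero.mpr (hxxt k j)
    have h2 : (x k - xt j) * b.repr (u j) k = f (u j) * ξv k := by
      linear_combination -(hcu j k)
    rw [eq_mul_inv_iff_mul_eq₀ hne]
    linear_combination h2
  -- the Cauchy linear system
  have hE : ∀ j, ∑ k, ξv k * (x k - xt j)⁻¹ = 1 := by
    intro j
    have hsum : f (u j) = ∑ k, b.repr (u j) k := by
      conv_lhs => rw [← b.sum_repr (u j)]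
      rw [map_sum]; simp [map_sum, map_smul, hfb, smul_eq_mul]
    have hmul : f (u j) * ∑ k, ξv k * (x k - xt j)⁻¹ = f (u j) * 1 := by
      rw [Finset.mul_sum, mul_one]
      conv_rhs => rw [hsum]
      apply Finset.sum_congr rfl
      intro k _
      rw [hck j k]; ring
    exact mul_left_cancel₀ (hfu j) hmul
  -- uniqueness of the solution
  have huniq : ∀ η : Fin n → K, (∀ j, ∑ i, η i * (x i - xt j)⁻¹ = 1) → η = ξv := by
    intro η hη
    let g : V →ₗ[K] K := ∑ k, ((η k - ξv k) * (ξv k)⁻¹) • b.coord k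
    have hgu : ∀ j, g (u j) = 0 := by
      intro j
      have h1 : g (u j) = ∑ k, (η k - ξv k) * (ξv k)⁻¹ * b.repr (u j) k := by
        simp [g, LinearMap.sum_apply, LinearMap.smul_apply, Basis.coord_apply, smul_eq_mul]
      rw [h1]
      have h2 : ∀ k ∈ Finset.univ, (η k - ξv k) * (ξv k)⁻¹ * b.repr (u j) k =
          f (u j) * ((η k - ξv k) * (x k - xt j)⁻¹) := by
        intro k _
        rw [hck j k]
        calc (η k - ξv k) * (ξv k)⁻¹ * (f (u j) * ξv k * (x k - xt j)⁻¹)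
            = f (u j) * ((η k - ξv k) * (x k - xt j)⁻¹) * ((ξv k)⁻¹ * ξv k) := by ring
          _ = f (u j) * ((η k - ξv k) * (x k - xt j)⁻¹) := by
              rw [inv_mul_cancel₀ (hξv k), mul_one]
      rw [Finset.sum_congr rfl h2, ← Finset.mul_sum]
      have hsub : ∑ k, (η k - ξv k) * (x k - xt j)⁻¹ = 0 := by
        have : ∑ k, (η k - ξv k) * (x k - xt j)⁻¹ =
            (∑ k, η k * (x k - xt j)⁻¹) - ∑ k, ξv k * (x k - xt j)⁻¹ := by
          rw [← Finset.sum_sub_distrib]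
          apply Finset.sum_congr rfl
          intro k _; ring
        rw [this, hη j, hE j, sub_self]
      rw [hsub, mul_zero]
    have hg0 : g = 0 := by
      apply LinearMap.ext_on hspan_top_u
      rintro _ ⟨j, rfl⟩
      simpa using hgu j
    funext i
    have hgb := LinearMap.congr_fun hg0 (b i)
    have h3 : (η i - ξv i) * (ξv i)⁻¹ = 0 := by
      rw [show (0 : V →ₗ[K] K) (b i) = 0 from rfl] at hgb
      rw [show g (b i) = ∑ k, (η k - ξv k) * (ξv k)⁻¹ * b.repr (b i) k from by
        simp [g, LinearMap.sum_apply, LinearMap.smul_apply, Basis.coord_apply, smul_eq_mul]]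
        at hgb
      rw [Finset.sum_eq_single i] at hgb
      · rw [Basis.repr_self, Finsupp.single_apply, if_pos rfl, mul_one] at hgb
        exact hgb
      · intro k _ hk
        rw [Basis.repr_self, Finsupp.single_apply, if_neg (fun h : i = k => hk h.symm),
          mul_zero]
      · intro h; exact absurd (Finset.mem_univ i) h
    rcases mul_eq_zero.mp h3 with h | h
    · exact sub_eq_zero.mp h
    · exact absurd h (inv_ne_zero (hξv i))
  exact ⟨b, ξv, hXb, hXtb', hE, huniq⟩


theorem stmt19 {K V : Type*} [Field K] [AddCommGroup V] [Module K V] [FiniteDimensional K V]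
    {n : ℕ} {X Xt Y Yt : Module.End K V}
    (hXX : IsCauchyPair K V X Xt) (hYY : IsCauchyPair K V Y Yt)
    (x xt y yt : Fin n → K)
    (hxinj : Function.Injective x)
    (hxeig : ∀ i, X.HasEigenvalue (x i))
    (hxall : ∀ μ : K, X.HasEigenvalue μ → ∃ i, x i = μ)
    (hxtinj : Function.Injective xt)
    (hxteig : ∀ i, Xt.HasEigenvalue (xt i))
    (hxtall : ∀ μ : K, Xt.HasEigenvalue μ → ∃ i, xt i = μ)
    (hyinj : Function.Injective y)
    (hyeig : ∀ i, Y.HasEigenvalue (y i))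
    (hyall : ∀ μ : K, Y.HasEigenvalue μ → ∃ i, y i = μ)
    (hytinj : Function.Injective yt)
    (hyteig : ∀ i, Yt.HasEigenvalue (yt i))
    (hytall : ∀ μ : K, Yt.HasEigenvalue μ → ∃ i, yt i = μ)
    (C : Matrix (Fin n) (Fin n) K)
    (hC1 : ∀ i j, C i j = (x i - xt j)⁻¹)
    (hC2 : ∀ i j, C i j = (y i - yt j)⁻¹) :
    ∃ ζ : K, ∃ φ : V ≃ₗ[K] V, ∀ v : V,
      φ (X v) = Y (φ v) + ζ • φ v ∧ φ (Xt v) = Yt (φ v) + ζ • φ v := by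
  classical
  rcases Nat.eq_zero_or_pos n with hn0 | hnpos
  · exfalso
    subst hn0
    obtain ⟨hXsup, _, hrank, _⟩ := hXX
    have hV : Nontrivial V := by
      by_contra h
      have hss : Subsingleton V := not_nontrivial_iff_subsingleton.mp h
      have hbot : LinearMap.range (X - Xt) = ⊥ := Subsingleton.elim _ _
      rw [hbot] at hrank
      rw [rank_bot] at hrank
      exact zero_ne_one hrank
    have hex : ∃ μ : K, X.eigenspace μ ≠ ⊥ := by
      by_contra h
      push_neg at h
      have : (⨆ μ : K, X.eigenspace μ) = ⊥ := by simp [h]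
      rw [this] at hXsup
      exact absurd hXsup bot_ne_top
    obtain ⟨μ, hμ⟩ := hex
    obtain ⟨i, _⟩ := hxall μ (Module.End.hasEigenvalue_iff.mpr hμ)
    exact Fin.elim0 i
  · have i0 : Fin n := ⟨0, hnpos⟩
    have hsub : ∀ i j, x i - xt j = y i - yt j := fun i j =>
      inv_injective (by rw [← hC1 i j, ← hC2 i j])
    set c : K := y i0 - x i0 with hcdef
    have hyc : ∀ i, y i = x i + c := by
      intro i
      rw [hcdef]
      linear_combination (hsub i0 i0) - (hsub i i0)
    have hytc : ∀ j, yt j = xt j + c := by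
      intro j
      rw [hcdef]
      linear_combination hsub i0 j
    set Y' : Module.End K V := Y - c • (1 : Module.End K V) with hY'def
    set Yt' : Module.End K V := Yt - c • (1 : Module.End K V) with hYt'def
    have hY'app : ∀ w : V, Y' w = Y w - c • w := by
      intro w
      rw [hY'def]
      simp [LinearMap.sub_apply, LinearMap.smul_apply, Module.End.one_apply]
    have hYt'app : ∀ w : V, Yt' w = Yt w - c • w := by
      intro w
      rw [hYt'def]
      simp [LinearMap.sub_apply, LinearMap.smul_apply, Module.End.one_apply]
    have hes : ∀ (Z : Module.End K V) (μ : K),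
        (Z - c • 1).eigenspace μ = Z.eigenspace (μ + c) := by
      intro Z μ
      rw [Module.End.eigenspace_def, Module.End.eigenspace_def]
      congr 1
      rw [add_smul, sub_sub, add_comm (μ • (1 : Module.End K V))]
    have hesY : ∀ μ, Y'.eigenspace μ = Y.eigenspace (μ + c) := by
      intro μ; rw [hY'def]; exact hes Y μ
    have hesYt : ∀ μ, Yt'.eigenspace μ = Yt.eigenspace (μ + c) := by
      intro μ; rw [hYt'def]; exact hes Yt μ
    obtain ⟨hY1, hY2, hY3, hY4⟩ := hYY
    have hCPY' : IsCauchyPair K V Y' Yt' := by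
      refine ⟨?_, ?_, ?_, ?_⟩
      · calc (⨆ μ : K, Y'.eigenspace μ) = ⨆ μ : K, Y.eigenspace (μ + c) :=
              iSup_congr (fun μ => hesY μ)
          _ = ⨆ μ : K, Y.eigenspace μ := (Equiv.addRight c).iSup_comp
          _ = ⊤ := hY1
      · calc (⨆ μ : K, Yt'.eigenspace μ) = ⨆ μ : K, Yt.eigenspace (μ + c) :=
              iSup_congr (fun μ => hesYt μ)
          _ = ⨆ μ : K, Yt.eigenspace μ := (Equiv.addRight c).iSup_comp
          _ = ⊤ := hY2
      · have h : Y' - Yt' = Y - Yt := by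
          rw [hY'def, hYt'def]; abel
        rw [h]; exact hY3
      · intro W hW1 hW2
        apply hY4 W
        · rintro _ ⟨w, hw, rfl⟩
          have h1 : Y' w ∈ W := hW1 ⟨w, hw, rfl⟩
          have : Y w = Y' w + c • w := by rw [hY'app w]; abel
          rw [this]
          exact W.add_mem h1 (W.smul_mem c hw)
        · rintro _ ⟨w, hw, rfl⟩
          have h1 : Yt' w ∈ W := hW2 ⟨w, hw, rfl⟩
          have : Yt w = Yt' w + c • w := by rw [hYt'app w]; abel
          rw [this]
          exact W.add_mem h1 (W.smul_mem c hw)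
    have hY'eig : ∀ i, Y'.HasEigenvalue (x i) := by
      intro i
      rw [Module.End.hasEigenvalue_iff, hesY (x i)]
      have : x i + c = y i := by rw [hyc i]
      rw [this]
      exact Module.End.hasEigenvalue_iff.mp (hyeig i)
    have hY'all : ∀ μ : K, Y'.HasEigenvalue μ → ∃ i, x i = μ := by
      intro μ h
      have h2 : Y.HasEigenvalue (μ + c) := by
        rw [Module.End.hasEigenvalue_iff, ← hesY μ]
        exact Module.End.hasEigenvalue_iff.mp h
      obtain ⟨i, hi⟩ := hyall _ h2
      exact ⟨i, by linear_combination hi - hyc i⟩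
    have hYt'eig : ∀ j, Yt'.HasEigenvalue (xt j) := by
      intro j
      rw [Module.End.hasEigenvalue_iff, hesYt (xt j)]
      have : xt j + c = yt j := by rw [hytc j]
      rw [this]
      exact Module.End.hasEigenvalue_iff.mp (hyteig j)
    have hYt'all : ∀ μ : K, Yt'.HasEigenvalue μ → ∃ j, xt j = μ := by
      intro μ h
      have h2 : Yt.HasEigenvalue (μ + c) := by
        rw [Module.End.hasEigenvalue_iff, ← hesYt μ]
        exact Module.End.hasEigenvalue_iff.mp h
      obtain ⟨j, hj⟩ := hytall _ h2
      exact ⟨j, by linear_combination hj - hytc j⟩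
    obtain ⟨b, ξv, hXb, hXtb, hEX, huniqX⟩ :=
      cauchyPairData hXX x xt hxinj hxeig hxall hxtinj hxteig hxtall
    obtain ⟨b2, ηv, hYb, hYtb, hEY, _⟩ :=
      cauchyPairData hCPY' x xt hxinj hY'eig hY'all hxtinj hYt'eig hYt'all
    have hηξ : ηv = ξv := huniqX ηv hEY
    let φ : V ≃ₗ[K] V := b.equiv b2 (Equiv.refl _)
    have hφb : ∀ i, φ (b i) = b2 i := fun i => by
      simp [φ, Module.Basis.equiv_apply]
    have h1 : ∀ w : V, φ (X w) = Y' (φ w) := by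
      have heq : (φ : V →ₗ[K] V) ∘ₗ (X : V →ₗ[K] V) =
          (Y' : V →ₗ[K] V) ∘ₗ (φ : V →ₗ[K] V) := by
        apply b.ext
        intro i
        simp only [LinearMap.comp_apply, LinearEquiv.coe_coe]
        rw [hXb i, map_smul, hφb i, hYb i]
      intro w
      simpa only [LinearMap.comp_apply, LinearEquiv.coe_coe] using
        LinearMap.congr_fun heq w
    have h2 : ∀ w : V, φ (Xt w) = Yt' (φ w) := by
      have heq : (φ : V →ₗ[K] V) ∘ₗ (Xt : V →ₗ[K] V) =
          (Yt' : V →ₗ[K] V) ∘ₗ (φ : V →ₗ[K] V) := by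
        apply b.ext
        intro i
        simp only [LinearMap.comp_apply, LinearEquiv.coe_coe]
        rw [hXtb i, map_sub, map_smul, map_sum, hφb i, hYtb i, hηξ]
        congr 1
        apply Finset.sum_congr rfl
        intro k _
        rw [map_smul, hφb k]
      intro w
      simpa only [LinearMap.comp_apply, LinearEquiv.coe_coe] using
        LinearMap.congr_fun heq w
    refine ⟨-c, φ, fun w => ⟨?_, ?_⟩⟩
    · rw [h1 w, hY'app (φ w), neg_smul, sub_eq_add_neg]
    · rw [h2 w, hYt'app (φ w), neg_smul, sub_eq_add_neg]
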